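/- Jacobi triple product: for |q| > 1 and p = q^{-1}, one has Θ_q(z) = (p;p)_∞ (z;p)_∞ (p z^{-1};p)_∞ for all z ∈ ℂ*, where (x;p)_∞ = Π_{k≥0}(1 - x p^k). -/

import Mathlib

open Complex Finset Filter Topology

noncomputable def jtpPi (p : ℂ) (m : ℕ) : ℂ := ∏ i ∈ Finset.range m, (1 - p ^ (i+1))

noncomputable def jtpGb (p : ℂ) (m k : ℕ) : ℂ :=
  if k ≤ m then jtpPi p m / (jtpPi p k * jtpPi p (m - k)) else 0

lemma jtp_factor_ne {p : ℂ} (hp : ‖p‖ < 1) (i : ℕ) : (1:ℂ) - p ^ (i+1) ≠ 0 := by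
  intro h
  have h1 : (1:ℂ) = p ^ (i+1) := by linear_combination h
  have : ‖p ^ (i+1)‖ < 1 := by
    rw [norm_pow]
    calc ‖p‖ ^ (i+1) ≤ ‖p‖ ^ 1 :=
      pow_le_pow_of_le_one (norm_nonneg p) hp.le (by omega)
    _ < 1 := by simpa using hp
  rw [← h1] at this
  simp at this

lemma jtpPi_ne_zero {p : ℂ} (hp : ‖p‖ < 1) (m : ℕ) : jtpPi p m ≠ 0 :=
  Finset.prod_ne_zero_iff.mpr (fun i _ => jtp_factor_ne hp i)

lemma jtpPi_zero (p : ℂ) : jtpPi p 0 = 1 := by simp [jtpPi]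

lemma jtpPi_succ (p : ℂ) (m : ℕ) : jtpPi p (m+1) = jtpPi p m * (1 - p ^ (m+1)) :=
  Finset.prod_range_succ _ _

lemma jtpGb_zero {p : ℂ} (hp : ‖p‖ < 1) (m : ℕ) : jtpGb p m 0 = 1 := by
  rw [jtpGb, if_pos (Nat.zero_le m), jtpPi_zero, Nat.sub_zero, one_mul,
    div_self (jtpPi_ne_zero hp m)]

lemma jtpGb_self {p : ℂ} (hp : ‖p‖ < 1) (m : ℕ) : jtpGb p m m = 1 := by
  rw [jtpGb, if_pos le_rfl, Nat.sub_self, jtpPi_zero, mul_one,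
    div_self (jtpPi_ne_zero hp m)]

lemma jtpGb_of_gt {p : ℂ} {m k : ℕ} (h : m < k) : jtpGb p m k = 0 := by
  simp [jtpGb, Nat.not_le.mpr h]

lemma jtpGb_pascal {p : ℂ} (hp : ‖p‖ < 1) (m k : ℕ) :
    jtpGb p (m+1) (k+1) = jtpGb p m (k+1) + p ^ (m - k) * jtpGb p m k := by
  rcases lt_trichotomy k m with hkm | rfl | hkm
  · obtain ⟨j, rfl⟩ : ∃ j, m = k + 1 + j := ⟨m - (k+1), by omega⟩
    have e1 : k + 1 + j + 1 - (k + 1) = j + 1 := by omega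
    have e2 : k + 1 + j - (k + 1) = j := by omega
    have e3 : k + 1 + j - k = j + 1 := by omega
    rw [jtpGb, jtpGb, jtpGb, if_pos (by omega), if_pos (by omega), if_pos (by omega),
      e1, e2, e3]
    have h3 := jtpPi_ne_zero hp k
    have h4 := jtpPi_ne_zero hp j
    have h5 := jtpPi_ne_zero hp (k+1+j)
    have ha := jtp_factor_ne hp k
    have hb := jtp_factor_ne hp j
    rw [show k+1+j+1 = (k+1+j)+1 from rfl, jtpPi_succ p (k+1+j), jtpPi_succ p k,
      jtpPi_succ p j]
    field_simp
    ring
  · rw [jtpGb_self hp, jtpGb_self hp, jtpGb_of_gt (by omega)]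
    simp
  · rw [jtpGb_of_gt (by omega), jtpGb_of_gt (by omega), jtpGb_of_gt (by omega)]
    simp

lemma jtp_tri_succ (k : ℕ) : (k+1)*k/2 = k*(k-1)/2 + k := by
  rcases k with _ | k
  · simp
  · rw [Nat.succ_sub_one]
    have h : (k+1+1)*(k+1) = (k+1)*k + (k+1)*2 := by ring
    rw [h, Nat.add_mul_div_right _ _ (by norm_num : 0 < 2)]

lemma jtp_gauss {p : ℂ} (hp : ‖p‖ < 1) (m : ℕ) (w : ℂ) :
    ∏ j ∈ Finset.range m, (1 + w * p ^ j)
      = ∑ k ∈ Finset.range (m+1), jtpGb p m k * p ^ (k*(k-1)/2) * w ^ k := by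
  induction m with
  | zero => simp [jtpGb_zero hp]
  | succ m ih =>
    rw [Finset.prod_range_succ, ih]
    have key : ∀ k ∈ Finset.range (m+1),
        jtpGb p (m+1) (k+1) * p ^ ((k+1)*k/2) * w ^ (k+1)
          = jtpGb p m (k+1) * p ^ ((k+1)*k/2) * w ^ (k+1)
            + (w * p ^ m) * (jtpGb p m k * p ^ (k*(k-1)/2) * w ^ k) := by
      intro k hk
      rw [Finset.mem_range] at hk
      rw [jtpGb_pascal hp]
      have he : p ^ (m - k) * p ^ ((k+1)*k/2) = p ^ m * p ^ (k*(k-1)/2) := by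
        rw [← pow_add, ← pow_add]
        congr 1
        have h1 := jtp_tri_succ k
        omega
      calc (jtpGb p m (k+1) + p ^ (m-k) * jtpGb p m k) * p ^ ((k+1)*k/2) * w ^ (k+1)
          = jtpGb p m (k+1) * p ^ ((k+1)*k/2) * w ^ (k+1)
            + jtpGb p m k * (p ^ (m-k) * p ^ ((k+1)*k/2)) * w ^ (k+1) := by ring
        _ = _ := by rw [he]; ring
    rw [Finset.sum_range_succ' (fun k => jtpGb p (m+1) k * p ^ (k*(k-1)/2) * w ^ k) (m+1)]
    simp only [Nat.succ_sub_one]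
    rw [Finset.sum_congr rfl key, Finset.sum_add_distrib, ← Finset.mul_sum]
    have hA : ∑ k ∈ Finset.range (m+1), jtpGb p m (k+1) * p ^ ((k+1)*k/2) * w ^ (k+1)
        = (∑ k ∈ Finset.range (m+1), jtpGb p m k * p ^ (k*(k-1)/2) * w ^ k) - 1 := by
      rw [eq_sub_iff_add_eq]
      have hshift := Finset.sum_range_succ'
        (fun k => jtpGb p m k * p ^ (k*(k-1)/2) * w ^ k) (m+1)
      simp only [Nat.succ_sub_one, jtpGb_zero hp, Nat.zero_mul, Nat.zero_div, pow_zero, mul_one, one_mul] at hshift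
      rw [← hshift, Finset.sum_range_succ, jtpGb_of_gt (by omega : m < m+1)]
      simp
    rw [hA, jtpGb_zero hp]
    simp only [pow_zero, mul_one, one_mul]
    ring

lemma jtp_cast_tri (k : ℕ) : ((k*(k-1)/2 : ℕ) : ℤ) = (k:ℤ)*((k:ℤ)-1)/2 := by
  rcases k with _ | k
  · simp
  · obtain ⟨r, hr⟩ := Nat.even_mul_succ_self k
    have hm : (k+1)*((k+1)-1) = 2*r := by rw [Nat.succ_sub_one, mul_comm, hr]; omega
    have hmz : ((k:ℤ)+1)*(((k:ℤ)+1)-1) = 2*r := by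
      have := congrArg (fun x : ℕ => (x : ℤ)) hm
      push_cast [Nat.succ_sub_one] at this ⊢
      linear_combination this
    rw [hm, Nat.mul_div_cancel_left _ (by norm_num : 0 < 2)]
    push_cast
    rw [hmz, Int.mul_ediv_cancel_left _ two_ne_zero]

lemma jtp_exp (N k : ℕ) :
    ((k:ℤ)-N)*((k:ℤ)-N-1)/2
      = (N:ℤ)*N - (N:ℤ)*((N:ℤ)-1)/2 + (k:ℤ)*((k:ℤ)-1)/2 - (N:ℤ)*k := by
  obtain ⟨a, ha⟩ : ∃ a : ℤ, (k:ℤ)*((k:ℤ)-1) = 2*a := by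
    obtain ⟨r, hr⟩ := Int.even_mul_succ_self ((k:ℤ)-1)
    exact ⟨r, by linear_combination hr⟩
  obtain ⟨b, hb⟩ : ∃ b : ℤ, ((k:ℤ)-N)*((k:ℤ)-N-1) = 2*b := by
    obtain ⟨r, hr⟩ := Int.even_mul_succ_self ((k:ℤ)-N-1)
    exact ⟨r, by linear_combination hr⟩
  obtain ⟨c, hc⟩ : ∃ c : ℤ, (N:ℤ)*((N:ℤ)-1) = 2*c := by
    obtain ⟨r, hr⟩ := Int.even_mul_succ_self ((N:ℤ)-1)
    exact ⟨r, by linear_combination hr⟩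
  rw [ha, hb, hc]
  rw [Int.mul_ediv_cancel_left _ two_ne_zero, Int.mul_ediv_cancel_left _ two_ne_zero,
    Int.mul_ediv_cancel_left _ two_ne_zero]
  have h2 : 2*b = 2*((N:ℤ)*N - c + a - (N:ℤ)*k) := by linear_combination ha - hb - hc
  omega

lemma jtp_finite {p z : ℂ} (hp : ‖p‖ < 1) (hp0 : p ≠ 0) (hz : z ≠ 0) (N : ℕ) :
    (∏ i ∈ Finset.range N, (1 - z * p ^ i))
      * (∏ i ∈ Finset.range N, (1 - p ^ (i+1) * z⁻¹))
    = ∑ k ∈ Finset.range (2*N+1), jtpGb p (2*N) k * (-1:ℂ)^(k+N)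
        * p ^ ((((k:ℤ)-N)*((k:ℤ)-N-1))/2) * z ^ ((k:ℤ)-N) := by
  have hpN : (p : ℂ) ^ N ≠ 0 := pow_ne_zero _ hp0
  set w : ℂ := -z * (p ^ N)⁻¹ with hw_def
  have hw : ∀ j : ℕ, w ^ j = (-1:ℂ)^j * z ^ j * p ^ (-((N:ℤ)*j)) := by
    intro j
    rw [hw_def, show -z * (p^N)⁻¹ = (-1) * z * (p^N)⁻¹ by ring,
      mul_pow, mul_pow, inv_pow, ← pow_mul, ← zpow_natCast p (N*j), ← zpow_neg]
    push_cast
    ring_nf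
  have h := jtp_gauss hp (2*N) w
  have hsplit : ∏ j ∈ Finset.range (2*N), (1 + w * p ^ j)
      = (∏ j ∈ Finset.range N, (1 + w * p ^ j))
        * ∏ j ∈ Finset.range N, (1 + w * p ^ (N + j)) := by
    rw [two_mul, Finset.prod_range_add]
  have h2 : ∀ j : ℕ, 1 + w * p ^ (N + j) = 1 - z * p ^ j := by
    intro j
    rw [hw_def, pow_add]
    field_simp
    ring
  have h3 : ∀ j ∈ Finset.range N, 1 + w * p ^ j
      = (-z * p ^ j * (p ^ N)⁻¹) * (1 - p ^ (N - j) * z⁻¹) := by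
    intro j hj
    rw [Finset.mem_range] at hj
    have hjN : p ^ j * p ^ (N - j) = p ^ N := by
      rw [← pow_add]; congr 1; omega
    rw [hw_def]
    field_simp
    linear_combination (-1) * hjN
  have h4 : ∏ j ∈ Finset.range N, (1 - p ^ (N - j) * z⁻¹)
      = ∏ i ∈ Finset.range N, (1 - p ^ (i+1) * z⁻¹) := by
    rw [← Finset.prod_range_reflect (fun i => 1 - p ^ (i+1) * z⁻¹) N]
    apply Finset.prod_congr rfl
    intro j hj
    rw [Finset.mem_range] at hj
    have hje : N - 1 - j + 1 = N - j := by omega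
    simp only [hje]
  set T : ℕ := N*(N-1)/2 with hT_def
  have h5 : ∏ j ∈ Finset.range N, (-z * p ^ j * (p ^ N)⁻¹)
      = w ^ N * p ^ T := by
    have heq : ∀ j ∈ Finset.range N, -z * p ^ j * (p ^ N)⁻¹ = w * p ^ j := by
      intro j _; rw [hw_def]; ring
    rw [Finset.prod_congr rfl heq, Finset.prod_mul_distrib, Finset.prod_const,
      Finset.card_range, Finset.prod_pow_eq_pow_sum, Finset.sum_range_id]
  set C : ℂ := w ^ N * p ^ T with hC_def
  have hC : C ≠ 0 := by
    apply mul_ne_zero (pow_ne_zero _ _) (pow_ne_zero _ hp0)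
    rw [hw_def]
    exact mul_ne_zero (neg_ne_zero.mpr hz) (inv_ne_zero hpN)
  have hprod : C * ((∏ i ∈ Finset.range N, (1 - z * p ^ i))
      * (∏ i ∈ Finset.range N, (1 - p ^ (i+1) * z⁻¹)))
      = ∑ k ∈ Finset.range (2*N+1), jtpGb p (2*N) k * p ^ (k*(k-1)/2) * w ^ k := by
    rw [← h, hsplit, Finset.prod_congr rfl h3, Finset.prod_mul_distrib, h4, h5]
    rw [Finset.prod_congr rfl (fun j _ => h2 j)]
    ring
  apply mul_left_cancel₀ hC
  rw [hprod, Finset.mul_sum]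
  apply Finset.sum_congr rfl
  intro k hk
  rw [Finset.mem_range] at hk
  symm
  rw [hC_def, hw N, hw k]
  have hsign : ((-1:ℂ)^N * ((-1:ℂ)^(k+N))) = (-1:ℂ)^k := by
    rw [← pow_add, show N + (k + N) = k + 2*N by ring, pow_add, pow_mul]
    norm_num
  have hzpow : (z:ℂ) ^ N * z ^ ((k:ℤ)-N) = z ^ k := by
    rw [← zpow_natCast z N, ← zpow_add₀ hz, ← zpow_natCast z k]
    congr 1
    ring
  have hppow : p ^ (-((N:ℤ)*N)) * (p:ℂ) ^ (T:ℤ) * p ^ ((((k:ℤ)-N)*((k:ℤ)-N-1))/2)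
      = p ^ ((k*(k-1)/2 : ℕ) : ℤ) * p ^ (-((N:ℤ)*k)) := by
    rw [← zpow_add₀ hp0, ← zpow_add₀ hp0, ← zpow_add₀ hp0]
    congr 1
    have e1 := jtp_exp N k
    have e2 : ((T:ℕ) : ℤ) = (N:ℤ)*((N:ℤ)-1)/2 := jtp_cast_tri N
    have e3 : ((k*(k-1)/2 : ℕ) : ℤ) = (k:ℤ)*((k:ℤ)-1)/2 := jtp_cast_tri k
    rw [e2, e3, e1]
    ring
  calc ((-1:ℂ)^N * z^N * p ^ (-((N:ℤ)*N))) * p ^ T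
        * (jtpGb p (2*N) k * (-1:ℂ)^(k+N) * p ^ ((((k:ℤ)-N)*((k:ℤ)-N-1))/2) * z ^ ((k:ℤ)-N))
      = jtpGb p (2*N) k * (((-1:ℂ)^N * (-1:ℂ)^(k+N)) * ((z:ℂ)^N * z ^ ((k:ℤ)-N))
          * (p ^ (-((N:ℤ)*N)) * (p:ℂ) ^ (T:ℤ) * p ^ ((((k:ℤ)-N)*((k:ℤ)-N-1))/2))) := by
        rw [zpow_natCast p T]; ring
    _ = jtpGb p (2*N) k * p ^ (k*(k-1)/2) * ((-1:ℂ)^k * z^k * p ^ (-((N:ℤ)*k))) := by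
        rw [hsign, hzpow, hppow, zpow_natCast p (k*(k-1)/2)]
        ring

lemma jtp_multipliable {u : ℕ → ℂ} (hu : Summable u) :
    Multipliable (fun n => 1 + u n) := by
  by_cases hne : ∀ n, 1 + u n ≠ 0
  · have hlog : Summable (fun n => Complex.log (1 + u n)) := by
      have htend : Tendsto u atTop (𝓝 0) := hu.tendsto_atTop_zero
      have hev : ∀ᶠ n in atTop, ‖Complex.log (1 + u n)‖ ≤ (3/2) * ‖u n‖ := by
        filter_upwards [htend.eventually (Metric.ball_mem_nhds 0 (by norm_num : (0:ℝ) < 1/2))]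
          with n hn
        apply Complex.norm_log_one_add_half_le_self
        simpa [dist_eq_norm] using hn.le
      apply Summable.of_norm_bounded_eventually_nat (g := ((3/2) * ‖u ·‖))
      · exact (hu.norm.mul_left _)
      · exact hev
    exact Complex.multipliable_of_summable_log hlog
  · push_neg at hne
    obtain ⟨n0, hn0⟩ := hne
    refine ⟨0, ?_⟩
    have hev : ∀ᶠ s in atTop, ∏ i ∈ s, (1 + u i) = 0 := by
      filter_upwards [eventually_ge_atTop {n0}] with s hs
      exact Finset.prod_eq_zero (hs (Finset.mem_singleton_self n0)) hn0
    exact Tendsto.congr' (hev.mono fun s hs => hs.symm) tendsto_const_nhds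

lemma jtp_tprod_ne_zero {u : ℕ → ℂ} (hu : Summable u) (hne : ∀ n, 1 + u n ≠ 0) :
    (∏' n, (1 + u n)) ≠ 0 := by
  have hlog : Summable (fun n => Complex.log (1 + u n)) := by
    have htend : Tendsto u atTop (𝓝 0) := hu.tendsto_atTop_zero
    have hev : ∀ᶠ n in atTop, ‖Complex.log (1 + u n)‖ ≤ (3/2) * ‖u n‖ := by
      filter_upwards [htend.eventually (Metric.ball_mem_nhds 0 (by norm_num : (0:ℝ) < 1/2))]
        with n hn
      apply Complex.norm_log_one_add_half_le_self
      simpa [dist_eq_norm] using hn.le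
    apply Summable.of_norm_bounded_eventually_nat (g := ((3/2) * ‖u ·‖))
    · exact (hu.norm.mul_left _)
    · exact hev
  have := Complex.cexp_tsum_eq_tprod (f := fun n => 1 + u n) (fun n => hne n) hlog
  rw [← this]
  exact Complex.exp_ne_zero _

lemma jtp_weier (a : ℕ → ℝ) (ha0 : ∀ i, 0 ≤ a i) (ha1 : ∀ i, a i ≤ 1) (K : ℕ) :
    ∀ m, 1 - ∑ i ∈ Finset.Ico K m, a i ≤ ∏ i ∈ Finset.Ico K m, (1 - a i) := by
  intro m
  induction m with
  | zero => simp
  | succ m ih =>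
    rcases lt_or_ge m K with hm | hm
    · rw [Finset.Ico_eq_empty (by omega)]
      simp
    · rw [Finset.sum_Ico_succ_top hm, Finset.prod_Ico_succ_top hm]
      have hP0 : (0:ℝ) ≤ ∏ i ∈ Finset.Ico K m, (1 - a i) :=
        Finset.prod_nonneg (fun i _ => by linarith [ha1 i])
      have hS0 : (0:ℝ) ≤ ∑ i ∈ Finset.Ico K m, a i :=
        Finset.sum_nonneg (fun i _ => ha0 i)
      have hmm := mul_le_mul_of_nonneg_right ih (by linarith [ha1 m] : (0:ℝ) ≤ 1 - a m)
      nlinarith [ha0 m, ha1 m, mul_nonneg hS0 (ha0 m)]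

lemma jtp_geom {r : ℝ} (h0 : 0 ≤ r) (h1 : r < 1) (n : ℕ) :
    ∑ i ∈ Finset.range n, r^i ≤ (1-r)⁻¹ := by
  rw [geom_sum_eq (by linarith : r ≠ 1), div_le_iff_of_neg (by linarith : r - 1 < 0)]
  have h4 : (1-r)⁻¹ * (r-1) = -1 := by
    rw [inv_mul_eq_div, div_eq_iff (by linarith : (1:ℝ)-r ≠ 0)]; ring
  linarith [pow_nonneg h0 n, h4]

lemma jtp_upper {p : ℂ} (hp : ‖p‖ < 1) (m : ℕ) :
    ‖jtpPi p m‖ ≤ Real.exp (‖p‖ / (1 - ‖p‖)) := by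
  set r := ‖p‖ with hr_def
  have hr0 : 0 ≤ r := norm_nonneg p
  rw [jtpPi, norm_prod]
  have h1 : ∀ i ∈ Finset.range m, ‖1 - p^(i+1)‖ ≤ Real.exp (r^(i+1)) := by
    intro i _
    calc ‖1 - p^(i+1)‖ ≤ ‖1‖ + ‖p^(i+1)‖ :=
          (norm_sub_le _ _ : ‖(1:ℂ) - p^(i+1)‖ ≤ _)
      _ = 1 + r^(i+1) := by rw [norm_one, norm_pow]
      _ ≤ Real.exp (r^(i+1)) := by
          have := Real.add_one_le_exp (r^(i+1))
          linarith
  calc ∏ i ∈ Finset.range m, ‖1 - p^(i+1)‖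
      ≤ ∏ i ∈ Finset.range m, Real.exp (r^(i+1)) :=
        Finset.prod_le_prod (fun i _ => norm_nonneg _) h1
    _ = Real.exp (∑ i ∈ Finset.range m, r^(i+1)) := by rw [Real.exp_sum]
    _ ≤ Real.exp (r / (1 - r)) := by
        apply Real.exp_le_exp.mpr
        have : ∑ i ∈ Finset.range m, r^(i+1) = r * ∑ i ∈ Finset.range m, r^i := by
          rw [Finset.mul_sum]
          exact Finset.sum_congr rfl (fun i _ => by rw [pow_succ'])
        rw [this, div_eq_mul_inv]
        exact mul_le_mul_of_nonneg_left (jtp_geom hr0 hp m) hr0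

lemma jtp_lower {p : ℂ} (hp : ‖p‖ < 1) :
    ∃ δ : ℝ, 0 < δ ∧ ∀ m, δ ≤ ‖jtpPi p m‖ := by
  set r := ‖p‖ with hr_def
  have hr0 : 0 ≤ r := norm_nonneg p
  have ha0 : ∀ i : ℕ, 0 ≤ r^(i+1) := fun i => pow_nonneg hr0 _
  have ha1 : ∀ i : ℕ, r^(i+1) ≤ 1 := fun i =>
    pow_le_one₀ hr0 hp.le
  -- choose K with tail sum ≤ 1/2
  obtain ⟨K, hK⟩ : ∃ K : ℕ, ∀ m, ∑ i ∈ Finset.Ico K m, r^(i+1) ≤ 1/2 := by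
    obtain ⟨K, hK⟩ := exists_pow_lt_of_lt_one (by linarith : (0:ℝ) < (1-r)/2) hp
    refine ⟨K, fun m => ?_⟩
    have hsum : ∑ i ∈ Finset.Ico K m, r^(i+1) ≤ r^(K+1) / (1 - r) := by
      rcases le_or_gt K m with hKm | hKm
      · calc ∑ i ∈ Finset.Ico K m, r^(i+1)
            = r^(K+1) * ∑ i ∈ Finset.range (m - K), r^i := by
              rw [Finset.mul_sum]
              rw [Finset.sum_Ico_eq_sum_range]
              apply Finset.sum_congr rfl
              intro i _
              rw [← pow_add]
              congr 1
              omega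
          _ ≤ r^(K+1) * (1 - r)⁻¹ :=
              mul_le_mul_of_nonneg_left (jtp_geom hr0 hp _) (pow_nonneg hr0 _)
          _ = r^(K+1) / (1 - r) := by rw [div_eq_mul_inv]
      · rw [Finset.Ico_eq_empty (by omega)]
        simp only [Finset.sum_empty]
        apply div_nonneg (pow_nonneg hr0 _) (by linarith)
    have : r^(K+1) / (1-r) ≤ 1/2 := by
      rw [div_le_div_iff₀ (by linarith) (by norm_num)]
      have hrK : r^(K+1) ≤ r^K := pow_le_pow_of_le_one hr0 hp.le (by omega)
      nlinarith [hK]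
    linarith
  have hπK : (0:ℝ) < ∏ i ∈ Finset.range K, (1 - r^(i+1)) := by
    apply Finset.prod_pos
    intro i _
    have : r^(i+1) < 1 := by
      calc r^(i+1) ≤ r := pow_le_of_le_one hr0 hp.le (by omega)
        _ < 1 := hp
    linarith
  set δ0 : ℝ := ∏ i ∈ Finset.range K, (1 - r^(i+1)) with hδ0
  refine ⟨δ0 / 2, by positivity, fun m => ?_⟩
  have hprodr : ∏ i ∈ Finset.range m, (1 - r^(i+1)) ≤ ‖jtpPi p m‖ := by
    rw [jtpPi, norm_prod]
    apply Finset.prod_le_prod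
    · intro i _; linarith [ha1 i]
    · intro i _
      have : ‖p^(i+1)‖ = r^(i+1) := by rw [norm_pow]
      calc 1 - r^(i+1) = 1 - ‖p^(i+1)‖ := by rw [this]
        _ ≤ ‖1 - p^(i+1)‖ := by
            have hns := norm_sub_norm_le (1:ℂ) (p^(i+1))
            simpa using hns
  refine le_trans ?_ hprodr
  rcases le_or_gt m K with hmK | hmK
  · have hsub : ∏ i ∈ Finset.range K, (1 - r^(i+1)) ≤ ∏ i ∈ Finset.range m, (1 - r^(i+1)) := by
      rw [← Finset.prod_range_mul_prod_Ico _ hmK]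
      have h1 : ∏ i ∈ Finset.Ico m K, (1 - r^(i+1)) ≤ 1 :=
        Finset.prod_le_one (fun i _ => by linarith [ha1 i]) (fun i _ => by linarith [ha0 i])
      nlinarith [Finset.prod_nonneg (fun i (_ : i ∈ Finset.range m) =>
        (by linarith [ha1 i] : (0:ℝ) ≤ 1 - r^(i+1)))]
    linarith
  · have hstep1 : δ0 / 2 ≤ δ0 * (1 - ∑ i ∈ Finset.Ico K m, r^(i+1)) := by
      have h5 := hK m
      nlinarith [mul_nonneg hπK.le (by linarith : (0:ℝ) ≤ 1/2 - ∑ i ∈ Finset.Ico K m, r^(i+1))]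
    calc δ0 / 2 ≤ δ0 * (1 - ∑ i ∈ Finset.Ico K m, r^(i+1)) := hstep1
      _ ≤ δ0 * ∏ i ∈ Finset.Ico K m, (1 - r^(i+1)) := by
        exact mul_le_mul_of_nonneg_left (jtp_weier (fun i => r^(i+1)) ha0 ha1 K m) hπK.le
      _ = ∏ i ∈ Finset.range m, (1 - r^(i+1)) := by
        rw [hδ0, Finset.prod_range_mul_prod_Ico _ hmK.le]

/-- summability helper by ratio test -/
lemma jtp_summable_aux {r R : ℝ} (hr0 : 0 ≤ r) (hr : r < 1) (hR : 0 < R) (c : ℕ → ℕ)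
    (hc : ∀ k, c k + k ≤ c (k+1)) : Summable (fun k : ℕ => r^(c k) * R^k) := by
  apply summable_of_ratio_norm_eventually_le (r := 1/2) (by norm_num)
  have htend : Tendsto (fun k : ℕ => r^k * R) atTop (𝓝 0) := by
    simpa using (tendsto_pow_atTop_nhds_zero_of_lt_one hr0 hr).mul_const R
  filter_upwards [htend.eventually (ge_mem_nhds (by norm_num : (0:ℝ) < 1/2))] with k hk
  have h1 : r^(c (k+1)) ≤ r^(c k + k) := pow_le_pow_of_le_one hr0 hr.le (hc k)
  have hterm : ∀ j m : ℕ, ‖r^m * R^j‖ = r^m * R^j := fun j m =>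
    abs_of_nonneg (mul_nonneg (pow_nonneg hr0 _) (pow_nonneg hR.le _))
  rw [hterm, hterm]
  calc r^(c (k+1)) * R^(k+1) ≤ r^(c k + k) * R^(k+1) := by
        apply mul_le_mul_of_nonneg_right h1 (pow_nonneg hR.le _)
    _ = (r^k * R) * (r^(c k) * R^k) := by ring
    _ ≤ (1/2) * (r^(c k) * R^k) := by
        apply mul_le_mul_of_nonneg_right hk
          (mul_nonneg (pow_nonneg hr0 _) (pow_nonneg hR.le _))

/-- The Jacobi theta function `Θ_q(z) = Σ_{n ∈ ℤ} (-1)^n q^{-n(n-1)/2} z^n` (for `|q| > 1`). -/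
noncomputable def jTheta (q z : ℂ) : ℂ :=
  ∑' n : ℤ, (-1 : ℂ) ^ n * q ^ (-(n * (n - 1) / 2)) * z ^ n

/-- The infinite `q`-Pochhammer symbol `(x;p)_∞ = Π_{k ≥ 0} (1 - x p^k)` (for `|p| < 1`). -/
noncomputable def qPochInf (x p : ℂ) : ℂ := ∏' k : ℕ, (1 - x * p ^ k)

/-- Jacobi triple product: `Θ_q(z) = (p;p)_∞ (z;p)_∞ (p z⁻¹;p)_∞` with `p = q⁻¹`, `|q| > 1`. -/
theorem jacobi_triple_product (q : ℂ) (hq : 1 < ‖q‖) (z : ℂ) (hz : z ≠ 0) :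
    jTheta q z = qPochInf q⁻¹ q⁻¹ * qPochInf z q⁻¹ * qPochInf (q⁻¹ * z⁻¹) q⁻¹ := by
  have hq0 : q ≠ 0 := by
    intro h; rw [h] at hq; simp at hq; linarith
  set p : ℂ := q⁻¹ with hp_def
  have hp0 : p ≠ 0 := inv_ne_zero hq0
  have hp : ‖p‖ < 1 := by
    rw [hp_def, norm_inv]
    exact inv_lt_one_of_one_lt₀ hq
  set r : ℝ := ‖p‖ with hr_def
  have hr0 : 0 < r := by
    rw [hr_def]
    exact norm_pos_iff.mpr hp0
  set R : ℝ := ‖z‖ with hR_def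
  have hR0 : 0 < R := norm_pos_iff.mpr hz
  -- the theta summand
  set w : ℤ → ℂ := fun n => (-1:ℂ)^n * p^(n*(n-1)/2) * z^n with hw_def
  -- summability of ‖w‖
  have hsumw : Summable (fun n : ℤ => ‖w n‖) := by
    have habs : ∀ n : ℤ, ‖w n‖ = r ^ (n*(n-1)/2) * R ^ n := by
      intro n
      rw [hw_def]
      simp only [norm_mul, norm_zpow]
      rw [norm_neg, norm_one, one_zpow, one_mul]
    apply Summable.of_nat_of_neg_add_one
    · apply Summable.congr (jtp_summable_aux hr0.le hp hR0 (fun k => k*(k-1)/2)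
        (fun k => by
          show k*(k-1)/2 + k ≤ (k+1)*(k+1-1)/2
          have hAB : (k+1)*(k+1-1) = k*(k-1) + 2*k := by
            rcases k with _ | j
            · simp
            · simp only [Nat.add_sub_cancel]
              ring
          omega))
      intro k
      rw [habs]
      have hcast := jtp_cast_tri k
      rw [← hcast, zpow_natCast, zpow_natCast]
    · have haux := (jtp_summable_aux hr0.le hp (inv_pos.mpr hR0) (fun k => (k+1)*(k+2)/2)
        (fun k => by
          show (k+1)*(k+2)/2 + k ≤ (k+1+1)*(k+1+2)/2
          have hAB : (k+1+1)*(k+1+2) = (k+1)*(k+2) + 2*(k+2) := by ring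
          omega)).mul_left R⁻¹
      apply Summable.congr haux
      intro k
      rw [habs]
      obtain ⟨t, ht⟩ := Nat.even_mul_succ_self (k+1)
      have ht' : (k+1)*(k+2) = 2*t := by
        have : (k+1)*(k+1+1) = (k+1)*(k+2) := rfl
        omega
      have hcast : (((k+1)*(k+2)/2 : ℕ) : ℤ) = (-((k:ℤ)+1))*((-((k:ℤ)+1))-1)/2 := by
        rw [ht', Nat.mul_div_cancel_left _ (by norm_num : 0 < 2)]
        have htz : (-((k:ℤ)+1))*((-((k:ℤ)+1))-1) = 2*(t:ℤ) := by
          have hc := congrArg (Nat.cast : ℕ → ℤ) ht'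
          push_cast at hc
          linear_combination hc
        rw [htz, Int.mul_ediv_cancel_left _ two_ne_zero]
      have hexp : (-((k:ℤ)+1))*((-((k:ℤ)+1))-1)/2 = (-((k:ℤ)+1)) * ((-((k:ℤ)+1)) - 1)/2 := rfl
      have hRe : R ^ (-((k:ℤ)+1)) = R⁻¹ * R⁻¹ ^ k := by
        have : (-((k:ℤ)+1)) = -((k+1 : ℕ) : ℤ) := by push_cast; ring
        rw [this, zpow_neg, ← inv_zpow, zpow_natCast, pow_succ']
      have harg : r ^ ((-((k:ℤ)+1))*((-((k:ℤ)+1))-1)/2) = r ^ ((k+1)*(k+2)/2 : ℕ) := by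
        rw [← hcast, zpow_natCast]
      calc R⁻¹ * (r ^ ((k+1)*(k+2)/2) * R⁻¹ ^ k)
          = r ^ ((k+1)*(k+2)/2 : ℕ) * (R⁻¹ * R⁻¹ ^ k) := by ring
        _ = r ^ ((-((k:ℤ)+1))*((-((k:ℤ)+1))-1)/2) * R ^ (-((k:ℤ)+1)) := by
            rw [harg, hRe]
  -- infinite products
  have hgeom : Summable (fun i : ℕ => p^i) :=
    summable_geometric_of_norm_lt_one hp
  have hsumu : Summable (fun i : ℕ => -(p^(i+1))) := by
    apply Summable.congr (hgeom.mul_left (-p))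
    intro i
    rw [pow_succ']
    ring
  set Pinf : ℂ := ∏' i : ℕ, (1 - p^(i+1)) with hPinf_def
  have hmultPi : Multipliable (fun i : ℕ => 1 - p^(i+1)) := by
    have := jtp_multipliable hsumu
    simpa [sub_eq_add_neg] using this
  have htendPi : Tendsto (fun m => jtpPi p m) atTop (𝓝 Pinf) := by
    simpa [jtpPi] using hmultPi.hasProd.tendsto_prod_nat
  have hPinf0 : Pinf ≠ 0 := by
    have h1 := jtp_tprod_ne_zero hsumu (fun n => by
      simpa [sub_eq_add_neg] using jtp_factor_ne hp n)
    have h2 : (∏' n : ℕ, (1 + -(p^(n+1)))) = Pinf :=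
      tprod_congr (fun n => by ring)
    rwa [h2] at h1
  -- uniform bound on Gaussian binomials
  obtain ⟨δ, hδ0, hδ⟩ := jtp_lower hp
  set U : ℝ := Real.exp (r / (1 - r)) with hU_def
  have hU0 : 0 < U := Real.exp_pos _
  set C : ℝ := U / (δ * δ) with hC_def
  have hC0 : 0 < C := by positivity
  have hgb_bound : ∀ m k, ‖jtpGb p m k‖ ≤ C := by
    intro m k
    rw [jtpGb]
    split
    · rw [norm_div, norm_mul]
      apply div_le_div₀ hU0.le (jtp_upper hp m) (by positivity)
      exact mul_le_mul (hδ k) (hδ (m-k)) hδ0.le (norm_nonneg _)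
    · simpa using hC0.le
  -- the indicator family
  set F : ℕ → ℤ → ℂ := fun N n =>
    if -(N:ℤ) ≤ n ∧ n ≤ N then jtpGb p (2*N) (n+N).toNat * w n else 0 with hF_def
  -- each tsum equals the finite product
  have htsumF : ∀ N : ℕ, (∑' n : ℤ, F N n)
      = (∏ i ∈ Finset.range N, (1 - z * p ^ i))
        * (∏ i ∈ Finset.range N, (1 - p ^ (i+1) * z⁻¹)) := by
    intro N
    rw [jtp_finite hp hp0 hz N]
    rw [tsum_eq_sum (s := Finset.Icc (-(N:ℤ)) N) (f := F N) (fun n hn => by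
      rw [Finset.mem_Icc] at hn
      exact if_neg (fun hcon => hn ⟨hcon.1, hcon.2⟩))]
    apply Finset.sum_nbij' (i := fun n : ℤ => (n + N).toNat)
      (j := fun k : ℕ => (k : ℤ) - N)
    · intro a ha
      rw [Finset.mem_Icc] at ha
      rw [Finset.mem_range]
      omega
    · intro a ha
      rw [Finset.mem_range] at ha
      rw [Finset.mem_Icc]
      omega
    · intro a ha
      rw [Finset.mem_Icc] at ha
      omega
    · intro a ha
      rw [Finset.mem_range] at ha
      omega
    · intro n hn
      rw [Finset.mem_Icc] at hn
      have hcond : -(N:ℤ) ≤ n ∧ n ≤ N := ⟨hn.1, hn.2⟩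
      rw [hF_def]
      simp only []
      rw [if_pos hcond]
      have hk : (((n + N).toNat : ℤ)) = n + N := Int.toNat_of_nonneg (by omega)
      have hkN : ((n + N).toNat : ℤ) - N = n := by omega
      rw [hkN]
      have hsign : ((-1:ℂ))^((n + N).toNat + N) = (-1:ℂ)^n := by
        rw [← zpow_natCast (-1 : ℂ) ((n+N).toNat + N)]
        have hcast2 : (((n+N).toNat + N : ℕ) : ℤ) = n + ((2*N : ℕ) : ℤ) := by
          push_cast
          omega
        rw [hcast2, zpow_add₀ (by norm_num : (-1:ℂ) ≠ 0), zpow_natCast, two_mul,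
          pow_add]
        have hone : (-1:ℂ)^N * (-1:ℂ)^N = 1 := by
          rw [← pow_add, ← two_mul, pow_mul]
          norm_num
        rw [hone, mul_one]
      rw [hsign, hw_def]
      ring
  -- the bound
  have hb : ∀ N : ℕ, ∀ n : ℤ, ‖F N n‖ ≤ C * ‖w n‖ := by
    intro N n
    rw [hF_def]
    simp only []
    split
    · rw [norm_mul]
      exact mul_le_mul_of_nonneg_right (hgb_bound _ _) (norm_nonneg _)
    · simp only [norm_zero]
      positivity
  -- pointwise limits
  have hlim : ∀ n : ℤ, Tendsto (fun N => F N n) atTop (𝓝 (Pinf⁻¹ * w n)) := by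
    intro n
    have h2Ntend : Tendsto (fun N : ℕ => 2*N) atTop atTop :=
      tendsto_atTop_atTop.mpr (fun b => ⟨b, fun a ha => by omega⟩)
    have hatend : Tendsto (fun N : ℕ => (n + N).toNat) atTop atTop :=
      tendsto_atTop_atTop.mpr (fun b => ⟨b + n.natAbs, fun a ha => by omega⟩)
    have hbtend : Tendsto (fun N : ℕ => ((N:ℤ) - n).toNat) atTop atTop :=
      tendsto_atTop_atTop.mpr (fun b => ⟨b + n.natAbs, fun a ha => by omega⟩)
    have hG : Tendsto (fun N => jtpPi p (2*N)
        / (jtpPi p ((n+N).toNat) * jtpPi p (((N:ℤ)-n).toNat)))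
        atTop (𝓝 (Pinf / (Pinf * Pinf))) :=
      Tendsto.div (htendPi.comp h2Ntend)
        ((htendPi.comp hatend).mul (htendPi.comp hbtend)) (mul_ne_zero hPinf0 hPinf0)
    have hG2 := hG.mul_const (w n)
    have hconst : Pinf / (Pinf * Pinf) * w n = Pinf⁻¹ * w n := by
      field_simp
    rw [hconst] at hG2
    apply Tendsto.congr' _ hG2
    filter_upwards [eventually_ge_atTop n.natAbs] with N hN
    have hN' : (n.natAbs : ℤ) ≤ (N : ℤ) := by exact_mod_cast hN
    have hcond : -(N:ℤ) ≤ n ∧ n ≤ N := by omega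
    rw [hF_def]
    simp only []
    rw [if_pos hcond]
    congr 1
    rw [jtpGb, if_pos (by omega : (n + N).toNat ≤ 2*N)]
    have harg : 2*N - (n+N).toNat = ((N:ℤ) - n).toNat := by omega
    rw [harg]
  -- dominated convergence
  have hDC := tendsto_tsum_of_dominated_convergence (𝓕 := atTop) (f := F)
    (g := fun n => Pinf⁻¹ * w n) (bound := fun n => C * ‖w n‖)
    (hsumw.mul_left C) hlim (Eventually.of_forall hb)
  -- product side convergence
  have hsumA : Summable (fun i : ℕ => -(z * p^i)) := by
    apply Summable.congr (hgeom.mul_left (-z))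
    intro i
    ring
  have hmultA : Multipliable (fun i : ℕ => 1 - z * p^i) := by
    have := jtp_multipliable hsumA
    simpa [sub_eq_add_neg] using this
  have hAt : Tendsto (fun N => ∏ i ∈ Finset.range N, (1 - z * p ^ i)) atTop
      (𝓝 (qPochInf z p)) := by
    have := hmultA.hasProd.tendsto_prod_nat
    simpa [qPochInf] using this
  have hsumB : Summable (fun i : ℕ => -(p^(i+1) * z⁻¹)) := by
    apply Summable.congr (hgeom.mul_left (-(p * z⁻¹)))
    intro i
    rw [pow_succ']
    ring
  have hmultB : Multipliable (fun i : ℕ => 1 - p^(i+1) * z⁻¹) := by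
    have := jtp_multipliable hsumB
    simpa [sub_eq_add_neg] using this
  have hBt : Tendsto (fun N => ∏ i ∈ Finset.range N, (1 - p^(i+1) * z⁻¹)) atTop
      (𝓝 (qPochInf (p * z⁻¹) p)) := by
    have h1 := hmultB.hasProd.tendsto_prod_nat
    have h2 : (∏' i : ℕ, (1 - p^(i+1) * z⁻¹)) = qPochInf (p * z⁻¹) p := by
      rw [qPochInf]
      apply tprod_congr
      intro k
      rw [pow_succ']
      ring
    rwa [h2] at h1
  have hprodT : Tendsto (fun N => (∏ i ∈ Finset.range N, (1 - z * p ^ i))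
      * (∏ i ∈ Finset.range N, (1 - p ^ (i+1) * z⁻¹))) atTop
      (𝓝 (qPochInf z p * qPochInf (p * z⁻¹) p)) := hAt.mul hBt
  -- identify the limits
  have hmain : (∑' n : ℤ, Pinf⁻¹ * w n) = qPochInf z p * qPochInf (p * z⁻¹) p := by
    apply tendsto_nhds_unique _ hprodT
    apply hDC.congr
    intro N
    exact htsumF N
  rw [tsum_mul_left] at hmain
  have hθ : jTheta q z = ∑' n : ℤ, w n := by
    apply tsum_congr
    intro n
    rw [hw_def]
    simp only []
    rw [zpow_neg, ← inv_zpow]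
  have hQP : qPochInf q⁻¹ q⁻¹ = Pinf := by
    rw [qPochInf, hPinf_def]
    apply tprod_congr
    intro k
    rw [pow_succ']
  have hfinal : jTheta q z = Pinf * (qPochInf z p * qPochInf (p * z⁻¹) p) := by
    rw [hθ, ← hmain]
    field_simp
  rw [hfinal, hQP]
  ring
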